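/- Let M⁰ ⊆ M¹ ⊆ ⋯ ⊆ Mˢ be closed subgroups of an abelian topological group, each inclusion a closed embedding, and set Qᵗ = Mᵗ/Mᵗ⁻¹ (with M⁻¹ = 0). Suppose for each t there is a continuous homomorphism p : Mˢ → Mᵗ whose restriction to Mᵗ is of the form Id + ψ with image of ψ contained in Mᵗ⁻¹. Then the resulting map ξ : Mˢ → Q⁰ × Q¹ × ⋯ × Qˢ (whose t-th coordinate is the composite Mˢ → Mᵗ → Qᵗ) is a weak homotopy equivalence. -/

import Mathlib

/-- The map induced by a continuous map on homotopy groups. -/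
def piMap {X Y : Type*} [TopologicalSpace X] [TopologicalSpace Y] (n : ℕ) (f : C(X, Y)) (x : X) :
    HomotopyGroup (Fin n) X x → HomotopyGroup (Fin n) Y (f x) :=
  Quotient.map
    (fun g => ⟨f.comp g.1, fun y hy => by
      simp only [ContinuousMap.comp_apply, g.2 y hy]⟩)
    (fun a b h => h.map (fun H => H.compContinuousMap f))

/-- A weak homotopy equivalence: a continuous map inducing bijections on all homotopy
groups at all basepoints. -/
def IsWeakHomotopyEquiv {X Y : Type*} [TopologicalSpace X] [TopologicalSpace Y]
    (f : C(X, Y)) : Prop :=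
  ∀ (n : ℕ) (x : X), Function.Bijective (piMap n f x)

/-- The "previous" subgroup of the filtration `M`: `prev M 0 = ⊥` and
`prev M (t+1) = M t`. -/
def prevSubgroup {G : Type*} [AddCommGroup G] (M : ℕ → AddSubgroup G) : ℕ → AddSubgroup G
  | 0 => ⊥
  | t + 1 => M t

theorem isWeakHomotopyEquiv_of_inverse {X Y : Type*} [TopologicalSpace X] [TopologicalSpace Y]
    (f : C(X, Y)) (g : C(Y, X)) (hgf : ∀ x, g (f x) = x) (hfg : ∀ y, f (g y) = y) :
    IsWeakHomotopyEquiv f := by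
  intro n x
  constructor
  · refine Quotient.ind fun a => Quotient.ind fun b h => ?_
    simp only [piMap, Quotient.map_mk] at h
    replace h := Quotient.exact h
    apply Quotient.sound
    obtain ⟨H⟩ := h
    refine ⟨((H.compContinuousMap g).cast ?_ ?_)⟩ <;>
    · ext y; simp [hgf]
  · refine Quotient.ind fun b => ?_
    refine ⟨Quotient.mk _ ⟨g.comp b.1, fun y hy => by
      simp only [ContinuousMap.comp_apply, b.2 y hy, hgf]⟩, ?_⟩
    simp only [piMap, Quotient.map_mk]
    erw [Quotient.map_mk]
    congr 1
    ext y
    simp only [GenLoop.mk_apply, ContinuousMap.comp_apply, hfg]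
    exact hfg (b y)



section Aux

variable {G : Type*} [AddCommGroup G] [TopologicalSpace G] [IsTopologicalAddGroup G]
  (s : ℕ) (M : ℕ → AddSubgroup G) (hmono : Monotone M)
  (p : ∀ t : Fin (s + 1), (M s) →+ (M t))

lemma prevSubgroup_le (hmono : Monotone M) (n : ℕ) : prevSubgroup M n ≤ M n := by
  cases n with
  | zero => exact bot_le
  | succ m => exact hmono (Nat.le_succ m)

lemma le_prevSubgroup (hmono : Monotone M) {j n : ℕ} (h : j < n) : M j ≤ prevSubgroup M n := by
  cases n with
  | zero => omega
  | succ m => exact hmono (by omega)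

/-- The index `s - k` as an element of `Fin (s+1)`. -/
def tauIdx (k : ℕ) : Fin (s + 1) := ⟨s - k, by omega⟩

/-- The recursively defined partial inverse. -/
def Wrec : ℕ → ((∀ t : Fin (s + 1), M t) →+ M s)
  | 0 => 0
  | k + 1 =>
    Wrec k +
      (AddSubgroup.inclusion (hmono (by omega : ((tauIdx s k : Fin (s+1)) : ℕ) ≤ s))).comp
        ((Pi.evalAddMonoidHom (fun t : Fin (s+1) => M t) (tauIdx s k)) -
          (p (tauIdx s k)).comp (Wrec k))

lemma continuous_Wrec (hp : ∀ t, Continuous (p t)) (k : ℕ) :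
    Continuous (Wrec s M hmono p k) := by
  induction k with
  | zero =>
    exact (continuous_const : Continuous fun _ : ∀ t : Fin (s+1), M t => (0 : M s))
  | succ k ih =>
    show Continuous fun y => Wrec s M hmono p k y +
      (AddSubgroup.inclusion (hmono (Nat.sub_le s k)) ((y (tauIdx s k)) - p (tauIdx s k) (Wrec s M hmono p k y)))
    refine ih.add (Continuous.subtype_mk ?_ _)
    exact (continuous_subtype_val.comp (continuous_apply (tauIdx s k))).sub
      (continuous_subtype_val.comp ((hp _).comp ih))

lemma Wrec_diff (y : ∀ t : Fin (s + 1), M t) (k d : ℕ) (hkd : k + 1 + d ≤ s + 1) :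
    ((Wrec s M hmono p (k + 1 + d) y : G) - Wrec s M hmono p (k + 1) y)
      ∈ prevSubgroup M (s - k) := by
  induction d with
  | zero => simpa using zero_mem _
  | succ d ih =>
    have hkd' : k + 1 + d ≤ s := by omega
    have h1 := ih (by omega)
    have : (Wrec s M hmono p (k + 1 + (d+1)) y : G) - Wrec s M hmono p (k+1+d) y
        ∈ prevSubgroup M (s - k) := by
      have : Wrec s M hmono p (k+1+d+1) y = Wrec s M hmono p (k+1+d) y +
          (AddSubgroup.inclusion (hmono (Nat.sub_le s (k+1+d))) ((y (tauIdx s (k+1+d))) -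
            p (tauIdx s (k+1+d)) (Wrec s M hmono p (k+1+d) y))) := rfl
      rw [show k + 1 + (d+1) = k+1+d+1 by omega, this]
      have hmem : ((y (tauIdx s (k+1+d)) : G) -
          p (tauIdx s (k+1+d)) (Wrec s M hmono p (k+1+d) y)) ∈ M (s - (k+1+d)) := by
        exact sub_mem (y (tauIdx s (k+1+d))).2 (p (tauIdx s (k+1+d)) _).2
      have hle : M (s - (k+1+d)) ≤ prevSubgroup M (s - k) :=
        le_prevSubgroup M hmono (by omega)
      simp
      exact hle hmem
    have := add_mem this h1
    simpa using this

lemma Wrec_star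
    (hrestr : ∀ (t : Fin (s + 1)) (x : M s), (x : G) ∈ M t →
      ((p t x : G) - x) ∈ prevSubgroup M t)
    (y : ∀ t : Fin (s + 1), M t) (k : ℕ) (hk : k ≤ s) :
    ((p (tauIdx s k) (Wrec s M hmono p (s+1) y) : G) - y (tauIdx s k))
      ∈ prevSubgroup M (s - k) := by
  set t := tauIdx s k with ht
  have hd := Wrec_diff s M hmono p y k (s - k) (by omega)
  rw [show k + 1 + (s - k) = s + 1 by omega] at hd
  set a : M s := Wrec s M hmono p (s+1) y - Wrec s M hmono p (k+1) y with ha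
  have hamem : (a : G) ∈ prevSubgroup M (s - k) := by simpa [ha] using hd
  have haM : (a : G) ∈ M (↑t : ℕ) := prevSubgroup_le M hmono (s - k) hamem
  have h1 := hrestr t a haM
  have hpa : (p t a : G) ∈ prevSubgroup M (s - k) := by
    have := add_mem h1 hamem
    simpa [ht, tauIdx] using this
  set z : M (↑t : ℕ) := y t - p t (Wrec s M hmono p k y) with hz
  set zc : M s := AddSubgroup.inclusion (hmono (Nat.sub_le s k)) z with hzc
  have hWk1 : Wrec s M hmono p (k+1) y = Wrec s M hmono p k y + zc := rfl
  have hzG : (zc : G) = (z : G) := rfl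
  have hzM : (zc : G) ∈ M (↑t : ℕ) := by rw [hzG]; exact z.2
  have h2 := hrestr t zc hzM
  have key : (p t (Wrec s M hmono p (s+1) y) : G) - y t
      = (p t a : G) + ((p t zc : G) - (zc : G)) := by
    have hW : Wrec s M hmono p (s+1) y = a + Wrec s M hmono p k y + zc := by
      rw [ha, hWk1]; abel
    rw [hW, map_add, map_add, hzG, hz]
    push_cast
    abel
  rw [key]
  exact add_mem hpa h2

lemma Wrec_ker
    (hrestr : ∀ (t : Fin (s + 1)) (x : M s), (x : G) ∈ M t →
      ((p t x : G) - x) ∈ prevSubgroup M t)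
    (x : M s) (h : ∀ t : Fin (s+1), (p t x : G) ∈ prevSubgroup M (↑t : ℕ)) : x = 0 := by
  have main : ∀ k, k ≤ s → (x : G) ∈ M (s - k) := by
    intro k
    induction k with
    | zero => intro _; simpa using x.2
    | succ k ih =>
      intro hk
      have hx : (x : G) ∈ M ((tauIdx s k : Fin (s+1)) : ℕ) := ih (by omega)
      have h1 : ((p (tauIdx s k) x : G) - x) ∈ prevSubgroup M (s - k) :=
        hrestr (tauIdx s k) x hx
      have h2 : (p (tauIdx s k) x : G) ∈ prevSubgroup M (s - k) := h (tauIdx s k)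
      have hsk : s - k = (s - (k+1)) + 1 := by omega
      rw [hsk] at h1 h2
      simp only [prevSubgroup] at h1 h2
      have : (x : G) = (p (tauIdx s k) x : G) - ((p (tauIdx s k) x : G) - (x : G)) := by abel
      rw [this]
      exact sub_mem h2 h1
  have hx0 : (x : G) ∈ M ((tauIdx s s : Fin (s+1)) : ℕ) := by
    have := main s le_rfl
    simpa [tauIdx] using this
  have h1 := hrestr (tauIdx s s) x hx0
  have h2 := h (tauIdx s s)
  have he : ((tauIdx s s : Fin (s+1)) : ℕ) = 0 := by simp [tauIdx]
  have hbot : prevSubgroup M ((tauIdx s s : Fin (s+1)) : ℕ) = ⊥ := by rw [he]; rfl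
  rw [hbot, AddSubgroup.mem_bot] at h1 h2
  have hpx : (p (tauIdx s s) x : G) = x := sub_eq_zero.mp h1
  exact Subtype.ext (hpx ▸ h2)

end Aux

/-- (Splitting principle.)  Let `M 0 ⊆ M 1 ⊆ ⋯ ⊆ M s` be closed subgroups of a
topological abelian group `G`, and set `Q t = M t / M (t-1)` (with `M (-1) = 0`).
Suppose for each `t ≤ s` there is a continuous homomorphism `p t : M s → M t` whose
restriction to `M t` is of the form `Id + ψ` with the image of `ψ` contained in
`M (t-1)`.  Then the map `ξ : M s → Q 0 × Q 1 × ⋯ × Q s`, whose `t`-th coordinate is the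
composite `M s → M t → Q t`, is a weak homotopy equivalence. -/
theorem splitting_of_filtration_with_projections
    {G : Type*} [AddCommGroup G] [TopologicalSpace G] [IsTopologicalAddGroup G]
    (s : ℕ) (M : ℕ → AddSubgroup G) (hmono : Monotone M)
    (hclosed : ∀ t, IsClosed (M t : Set G))
    (p : ∀ t : Fin (s + 1), (M s) →+ (M t))
    (hp : ∀ t, Continuous (p t))
    (hrestr : ∀ (t : Fin (s + 1)) (x : M s), (x : G) ∈ M t →
      ((p t x : G) - x) ∈ prevSubgroup M t) :
    IsWeakHomotopyEquiv
      (X := M s)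
      (Y := ∀ t : Fin (s + 1), (M t) ⧸ (prevSubgroup M t).addSubgroupOf (M t))
      ⟨fun x t => QuotientAddGroup.mk (p t x),
        by exact continuous_pi fun t => continuous_quot_mk.comp (hp t)⟩ := by
  classical
  set L := Wrec s M hmono p (s + 1) with hL
  -- the key property of `L`
  have star : ∀ (y : ∀ t : Fin (s + 1), M t) (t : Fin (s + 1)),
      ((p t (L y) : G) - y t) ∈ prevSubgroup M (t : ℕ) := by
    intro y t
    have hts : (t : ℕ) ≤ s := by omega
    have he : tauIdx s (s - (t : ℕ)) = t := by
      apply Fin.ext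
      show s - (s - (t : ℕ)) = t
      omega
    rw [← he]
    exact Wrec_star s M hmono p hrestr y (s - (t : ℕ)) (by omega)
  -- if two inputs agree modulo the previous subgroups, `L` agrees
  have hker : ∀ y y' : ∀ t : Fin (s + 1), M t,
      (∀ t : Fin (s + 1), ((y t : G) - y' t) ∈ prevSubgroup M (t : ℕ)) → L y = L y' := by
    intro y y' hyy
    have hsub : L y - L y' = L (y - y') := (map_sub L y y').symm
    have hz : L (y - y') = 0 := by
      apply Wrec_ker s M p hrestr
      intro t
      have h1 := star (y - y') t
      have h2 : (((y - y') t : M (t : ℕ)) : G) ∈ prevSubgroup M (t : ℕ) := by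
        simpa using hyy t
      have := add_mem h1 h2
      simpa using this
    exact sub_eq_zero.mp (hsub.trans hz)
  set πm : (∀ t : Fin (s + 1), M t) →
      (∀ t : Fin (s + 1), (M t) ⧸ (prevSubgroup M t).addSubgroupOf (M t)) :=
    fun y t => QuotientAddGroup.mk (y t) with hπm
  have hπcont : Continuous πm :=
    continuous_pi fun t => continuous_quot_mk.comp (continuous_apply t)
  have hout : ∀ q : (∀ t : Fin (s + 1), (M t) ⧸ (prevSubgroup M t).addSubgroupOf (M t)),
      ∀ t, QuotientAddGroup.mk (Quotient.out (q t)) = q t := by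
    intro q t
    exact Quotient.out_eq' (q t)
  have hπsurj : Function.Surjective πm := by
    intro q
    exact ⟨fun t => Quotient.out (q t), funext fun t => hout q t⟩
  have hmk : ∀ (t : Fin (s + 1)) (a b : M (t : ℕ)), ((a : G) - b) ∈ prevSubgroup M (t : ℕ) →
      (QuotientAddGroup.mk a : (M t) ⧸ (prevSubgroup M t).addSubgroupOf (M t))
        = QuotientAddGroup.mk b := by
    intro t a b hab
    rw [QuotientAddGroup.eq, AddSubgroup.mem_addSubgroupOf]
    have hco : ((-a + b : M (t : ℕ)) : G) = -((a : G) - b) := by push_cast; abel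
    rw [hco]
    exact neg_mem hab
  have hwd : ∀ y y', πm y = πm y' → L y = L y' := by
    intro y y' h
    apply hker
    intro t
    have h1 : QuotientAddGroup.mk (y t) = QuotientAddGroup.mk (y' t) := congrFun h t
    rw [QuotientAddGroup.eq, AddSubgroup.mem_addSubgroupOf] at h1
    have h2 : (-(y t : G) + (y' t : G)) ∈ prevSubgroup M (t : ℕ) := by simpa using h1
    have := neg_mem h2
    simpa [neg_add_rev, sub_eq_add_neg, add_comm] using this
  set g0 : (∀ t : Fin (s + 1), (M t) ⧸ (prevSubgroup M t).addSubgroupOf (M t)) → M s :=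
    fun q => L (fun t => Quotient.out (q t)) with hg0
  have hgπ : ∀ y, g0 (πm y) = L y := by
    intro y
    apply hwd
    funext t
    exact hout (πm y) t
  -- π is an open map
  have hopen : IsOpenMap πm := by
    intro U hU
    rw [isOpen_iff_mem_nhds]
    rintro _ ⟨y, hyU, rfl⟩
    have hU' : U ∈ nhds y := hU.mem_nhds hyU
    rw [nhds_pi, Filter.mem_pi] at hU'
    obtain ⟨I, hIf, W, hW, hsub⟩ := hU'
    refine Filter.mem_of_superset
      (set_pi_mem_nhds hIf (fun t _ => IsOpenMap.image_mem_nhds QuotientAddGroup.isOpenMap_coe (hW t)))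
      ?_
    intro q hq
    choose w hw1 hw2 using fun (t : Fin (s+1)) (ht : t ∈ I) => (hq t ht : q t ∈ _)
    refine ⟨fun t => if ht : t ∈ I then w t ht else Quotient.out (q t), ?_, ?_⟩
    · apply hsub
      intro t ht
      simp only [dif_pos ht]
      exact hw1 t ht
    · funext t
      by_cases ht : t ∈ I
      · simp only [hπm, dif_pos ht]
        exact hw2 t ht
      · simp only [hπm, dif_neg ht]
        exact hout q t
  have hπq : Topology.IsQuotientMap πm := hopen.isQuotientMap hπcont hπsurj
  have hg0c : Continuous g0 := by
    rw [hπq.continuous_iff]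
    have : g0 ∘ πm = L := funext hgπ
    rw [this]
    exact continuous_Wrec s M hmono p hp (s + 1)
  apply isWeakHomotopyEquiv_of_inverse _ ⟨g0, hg0c⟩
  · -- g ∘ f = id
    intro x
    show g0 (πm (fun t => p t x)) = x
    rw [hgπ]
    have hz : L (fun t => p t x) - x = 0 := by
      apply Wrec_ker s M p hrestr
      intro t
      have h1 := star (fun t => p t x) t
      have h2 : (p t (L (fun t => p t x) - x) : G)
          = (p t (L (fun t => p t x)) : G) - (p t x : G) := by
        rw [map_sub]
        rfl
      rw [h2]
      exact h1
    exact sub_eq_zero.mp hz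
  · -- f ∘ g = id
    intro q
    funext t
    show QuotientAddGroup.mk (p t (g0 q)) = q t
    rw [← hout q t]
    exact hmk t _ _ (star (fun u => Quotient.out (q u)) t)
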